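/- In the dual quaternions 𝔻ℍ, the group of unit dual quaternions acts transitively by conjugation on the set of elements h with h² = −1 and strictly real norm (i.e., on lines): for any two such h₁, h₂ there exists an invertible g ∈ 𝔻ℍ with h₂ = g h₁ g⁻¹. -/

import Mathlib

open Quaternion

/-- An element squaring to `-1` is a pure (imaginary) quaternion. -/
private lemma star_eq_neg_of_sq (q : Quaternion ℝ) (h : q * q = -1) : star q = -q := by
  have h' := Quaternion.ext_iff.mp h
  simp [Quaternion.re_mul, Quaternion.imI_mul, Quaternion.imJ_mul, Quaternion.imK_mul] at h'
  obtain ⟨h1, h2, h3, h4⟩ := h'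
  have hre : q.re = 0 := by nlinarith [sq_nonneg q.imI, sq_nonneg q.imJ, sq_nonneg q.imK]
  ext <;> simp [hre]

/-- Normalize an intertwiner to a unit quaternion. -/
private lemma unitize (a₀ q₁ q₂ : Quaternion ℝ) (h : a₀ ≠ 0) (hc : a₀ * q₁ = q₂ * a₀) :
    ∃ a : Quaternion ℝ, a * star a = 1 ∧ star a * a = 1 ∧ a * q₁ = q₂ * a := by
  have hn : normSq a₀ ≠ 0 := by simpa using h
  have hnn : (0:ℝ) ≤ normSq a₀ := normSq_nonneg
  set s : ℝ := (Real.sqrt (normSq a₀))⁻¹ with hs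
  have hss : s * s * normSq a₀ = 1 := by
    rw [hs, ← mul_inv, Real.mul_self_sqrt hnn]
    field_simp
  refine ⟨s • a₀, ?_, ?_, ?_⟩
  · rw [Quaternion.star_smul, smul_mul_smul_comm, self_mul_star, ← Quaternion.coe_mul_eq_smul,
      ← Quaternion.coe_mul, hss, Quaternion.coe_one]
  · rw [Quaternion.star_smul, smul_mul_smul_comm, star_mul_self, ← Quaternion.coe_mul_eq_smul,
      ← Quaternion.coe_mul, hss, Quaternion.coe_one]
  · rw [smul_mul_assoc, hc, mul_smul_comm]

private def qmk (a b c d : ℝ) : Quaternion ℝ := ⟨a, b, c, d⟩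

@[simp] private lemma qmk_re (a b c d : ℝ) : (qmk a b c d).re = a := rfl

@[simp] private lemma qmk_imI (a b c d : ℝ) : (qmk a b c d).imI = b := rfl

@[simp] private lemma qmk_imJ (a b c d : ℝ) : (qmk a b c d).imJ = c := rfl

@[simp] private lemma qmk_imK (a b c d : ℝ) : (qmk a b c d).imK = d := rfl

/-- Unit quaternions act transitively by conjugation on square roots of `-1`. -/
private lemma rot_trans (q₁ q₂ : Quaternion ℝ) (h1 : q₁ * q₁ = -1) (h2 : q₂ * q₂ = -1) :
    ∃ a : Quaternion ℝ, a * star a = 1 ∧ star a * a = 1 ∧ a * q₁ = q₂ * a := by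
  by_cases h : (1 : Quaternion ℝ) - q₂ * q₁ = 0
  · have hq : q₂ * q₁ = 1 := ((sub_eq_zero.mp h).symm)
    have hq2 : q₂ = -q₁ := by
      have h3 := congrArg (· * q₁) hq
      simp only [one_mul, mul_assoc, h1, mul_neg_one] at h3
      rw [← h3, neg_neg]
    subst hq2
    have hre : q₁.re = 0 := by
      have h' := Quaternion.ext_iff.mp h1
      simp [Quaternion.re_mul, Quaternion.imI_mul, Quaternion.imJ_mul, Quaternion.imK_mul] at h'
      obtain ⟨a1, a2, a3, a4⟩ := h'
      nlinarith [sq_nonneg q₁.imI, sq_nonneg q₁.imJ, sq_nonneg q₁.imK]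
    by_cases hxy : q₁.imI ^ 2 + q₁.imJ ^ 2 = 0
    · have hx : q₁.imI = 0 := by nlinarith [sq_nonneg q₁.imI, sq_nonneg q₁.imJ]
      have hy : q₁.imJ = 0 := by nlinarith [sq_nonneg q₁.imI, sq_nonneg q₁.imJ]
      refine ⟨qmk 0 1 0 0, ?_, ?_, ?_⟩
      · ext <;> simp [Quaternion.re_mul, Quaternion.imI_mul, Quaternion.imJ_mul, Quaternion.imK_mul]
      · ext <;> simp [Quaternion.re_mul, Quaternion.imI_mul, Quaternion.imJ_mul, Quaternion.imK_mul]
      · ext <;> simp [Quaternion.re_mul, Quaternion.imI_mul, Quaternion.imJ_mul,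
          Quaternion.imK_mul, hre, hx, hy]
    · refine unitize (qmk 0 (-q₁.imJ) q₁.imI 0) _ _ ?_ ?_
      · intro hz
        rw [Quaternion.ext_iff] at hz
        simp at hz
        exact hxy (by rw [hz.1, hz.2]; ring)
      · ext <;> simp [Quaternion.re_mul, Quaternion.imI_mul, Quaternion.imJ_mul,
          Quaternion.imK_mul, hre] <;> ring
  · refine unitize (1 - q₂ * q₁) _ _ h ?_
    rw [sub_mul, one_mul, mul_sub, mul_one, mul_assoc q₂ q₁ q₁, h1, ← mul_assoc q₂ q₂ q₁, h2]
    noncomm_ring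

/-- conjugate of a dual quaternion (quaternion conjugation on both parts) -/
noncomputable def dconj (d : DualNumber (Quaternion ℝ)) : DualNumber (Quaternion ℝ) :=
  (star d.fst, star d.snd)

private def dmk (x y : Quaternion ℝ) : DualNumber (Quaternion ℝ) := (x, y)

private lemma dmk_fst (x y : Quaternion ℝ) : (dmk x y).fst = x := rfl

private lemma dmk_snd (x y : Quaternion ℝ) : (dmk x y).snd = y := rfl

private lemma dconj_fst' (d : DualNumber (Quaternion ℝ)) : (dconj d).fst = star d.fst := rfl

private lemma dconj_snd' (d : DualNumber (Quaternion ℝ)) : (dconj d).snd = star d.snd := rfl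

set_option maxHeartbeats 2000000 in
/-- The group of unit dual quaternions acts transitively by conjugation
on lines, i.e. on elements `h ∈ 𝔻ℍ` with `h² = -1` and strictly real norm (the dual part
of `h·h̄` vanishes): for any two such `h₁, h₂` there is an invertible `g` (a unit dual
quaternion, with inverse `dconj g`) such that `h₂ = g·h₁·g⁻¹`. -/
theorem stmt_8
    (h₁ h₂ : DualNumber (Quaternion ℝ))
    (hh₁ : h₁ * h₁ = -1) (hh₂ : h₂ * h₂ = -1)
    (hn₁ : (h₁ * dconj h₁).snd = 0) (hn₂ : (h₂ * dconj h₂).snd = 0) :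
    ∃ g : DualNumber (Quaternion ℝ),
      g * dconj g = 1 ∧ dconj g * g = 1 ∧ h₂ = g * h₁ * dconj g := by
  set q₁ : Quaternion ℝ := h₁.fst with hq₁def
  set p₁ : Quaternion ℝ := h₁.snd with hp₁def
  set q₂ : Quaternion ℝ := h₂.fst with hq₂def
  set p₂ : Quaternion ℝ := h₂.snd with hp₂def
  -- extract component equations
  have hq1 : q₁ * q₁ = -1 := by
    have := congrArg TrivSqZeroExt.fst hh₁; simpa using this
  have hq2 : q₂ * q₂ = -1 := by
    have := congrArg TrivSqZeroExt.fst hh₂; simpa using this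
  have hp1 : q₁ * p₁ + p₁ * q₁ = 0 := by
    have := congrArg TrivSqZeroExt.snd hh₁
    rw [DualNumber.snd_mul] at this; simpa using this
  have hp2 : q₂ * p₂ + p₂ * q₂ = 0 := by
    have := congrArg TrivSqZeroExt.snd hh₂
    rw [DualNumber.snd_mul] at this; simpa using this
  have hn1 : q₁ * star p₁ + p₁ * star q₁ = 0 := by
    rw [DualNumber.snd_mul] at hn₁; simpa [dconj] using hn₁
  have hsq1 : star q₁ = -q₁ := star_eq_neg_of_sq _ hq1
  have hsq2 : star q₂ = -q₂ := star_eq_neg_of_sq _ hq2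
  have hq1ne : q₁ ≠ 0 := by
    intro hz; rw [hz] at hq1; simp at hq1
  have hanti1 : q₁ * p₁ = -(p₁ * q₁) := eq_neg_of_add_eq_zero_left hp1
  have hanti2 : q₂ * p₂ = -(p₂ * q₂) := eq_neg_of_add_eq_zero_left hp2
  -- p₁, p₂ are pure
  have hn2 : q₂ * star p₂ + p₂ * star q₂ = 0 := by
    rw [DualNumber.snd_mul] at hn₂; simpa [dconj] using hn₂
  have hq2ne : q₂ ≠ 0 := by
    intro hz; rw [hz] at hq2; simp at hq2
  have pure_p : ∀ (q p : Quaternion ℝ), q ≠ 0 → star q = -q → q * p = -(p * q) →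
      q * star p + p * star q = 0 → star p = -p := by
    intro q p hne hsq hanti hn
    have h1 : q * star p = p * q := by
      rw [hsq, mul_neg, add_neg_eq_zero] at hn
      exact hn
    have key : q * (star p + p) = 0 := by
      rw [mul_add, h1, hanti, add_neg_cancel]
    rcases mul_eq_zero.mp key with h | h
    · exact absurd h hne
    · exact eq_neg_of_add_eq_zero_left h
  have hsp1 : star p₁ = -p₁ := pure_p q₁ p₁ hq1ne hsq1 hanti1 hn1
  have hsp2 : star p₂ = -p₂ := pure_p q₂ p₂ hq2ne hsq2 hanti2 hn2
  -- get the rotation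
  obtain ⟨a, hu1, hu2, hac⟩ := rot_trans q₁ q₂ hq1 hq2
  have E1 : q₁ * star a = star a * q₂ := by
    have h' := congrArg star hac
    rw [star_mul, star_mul, hsq1, hsq2, neg_mul, mul_neg] at h'
    exact neg_injective h'
  have E2 : a * q₁ * star a = q₂ := by rw [hac, mul_assoc, hu1, mul_one]
  set w : Quaternion ℝ := a * p₁ * star a with hwdef
  have E3 : star w = -w := by
    rw [hwdef, star_mul, star_mul, star_star, hsp1]
    noncomm_ring
  have E4 : q₂ * w = -(w * q₂) := by
    calc q₂ * (a * p₁ * star a) = (q₂ * a) * (p₁ * star a) := by noncomm_ring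
      _ = (a * q₁) * (p₁ * star a) := by rw [hac]
      _ = a * ((q₁ * p₁) * star a) := by noncomm_ring
      _ = a * ((-(p₁ * q₁)) * star a) := by rw [hanti1]
      _ = -(a * p₁ * (q₁ * star a)) := by noncomm_ring
      _ = -(a * p₁ * (star a * q₂)) := by rw [E1]
      _ = -(a * p₁ * star a * q₂) := by noncomm_ring
  set r : Quaternion ℝ := p₂ - w with hrdef
  have E5 : star r = -r := by rw [hrdef, star_sub, hsp2, E3]; noncomm_ring
  have E6 : q₂ * r = -(r * q₂) := by
    rw [hrdef, mul_sub, sub_mul, hanti2, E4]; noncomm_ring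
  set c : Quaternion ℝ := (-(2:ℝ)⁻¹) • (r * q₂) with hcdef
  have E7 : c * q₂ - q₂ * c = r := by
    have t1 : (r * q₂) * q₂ = -r := by rw [mul_assoc, hq2, mul_neg_one]
    have t2 : q₂ * (r * q₂) = r := by
      rw [← mul_assoc, E6, neg_mul, mul_assoc, hq2, mul_neg_one, neg_neg]
    rw [hcdef, smul_mul_assoc, mul_smul_comm, t1, t2]
    rw [smul_neg, ← neg_smul, ← sub_smul]
    norm_num
  have E8 : star c = -c := by
    rw [hcdef, Quaternion.star_smul, star_mul, hsq2, E5, neg_mul_neg, E6, smul_neg]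
  clear_value q₁ p₁ q₂ p₂ w r c
  refine ⟨dmk a (c * a), ?_, ?_, ?_⟩
  · apply TrivSqZeroExt.ext
    · simpa [dconj_fst', dmk_fst] using hu1
    · rw [DualNumber.snd_mul]
      simp only [dconj_fst', dconj_snd', dmk_fst, dmk_snd, TrivSqZeroExt.snd_one]
      rw [star_mul, E8]
      calc a * (star a * -c) + c * a * star a
          = -((a * star a) * c) + c * (a * star a) := by noncomm_ring
        _ = 0 := by rw [hu1]; noncomm_ring
  · apply TrivSqZeroExt.ext
    · simpa [dconj_fst', dmk_fst] using hu2
    · rw [DualNumber.snd_mul]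
      simp only [dconj_fst', dconj_snd', dmk_fst, dmk_snd, TrivSqZeroExt.snd_one]
      rw [star_mul, E8, mul_neg, neg_mul, ← mul_assoc, add_neg_cancel]
  · apply TrivSqZeroExt.ext
    · simp only [TrivSqZeroExt.fst_mul, dconj_fst', dmk_fst]
      rw [← hq₂def, ← hq₁def, E2.symm]
    · rw [DualNumber.snd_mul, DualNumber.snd_mul]
      simp only [dconj_fst', dconj_snd', TrivSqZeroExt.fst_mul, dmk_fst, dmk_snd,
        ← hq₁def, ← hp₁def, ← hp₂def]
      rw [star_mul, E8]
      have s1 : p₂ = w + r := by rw [hrdef]; abel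
      have s2 : w + r = w + (c * q₂ - q₂ * c) := by rw [E7]
      have s3 : w + (c * q₂ - q₂ * c)
          = (a * p₁ * star a) + (c * (a * q₁ * star a) - (a * q₁ * star a) * c) := by
        rw [hwdef, E2]
      have s4 : (a * p₁ * star a) + (c * (a * q₁ * star a) - (a * q₁ * star a) * c)
          = a * q₁ * (star a * -c) + (a * p₁ + c * a * q₁) * star a := by noncomm_ring
      rw [s1, s2, s3, s4]
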